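/- The SHR xorshift transformation T has maximal period: for every nonzero 32-bit word x, the least positive integer n such that the n-fold iterate T^[n](x) equals x is 2^32 − 1. -/

import Mathlib

def T (x : BitVec 32) : BitVec 32 :=
  let y₁ := x ^^^ (x <<< 13)
  let y₂ := y₁ ^^^ (y₁ >>> 17)
  y₂ ^^^ (y₂ <<< 5)

def mv : List (BitVec 32) → Nat → BitVec 32 → BitVec 32
  | [], _, _ => 0
  | c :: cs, i, x => (if x.getLsbD i then c else 0) ^^^ mv cs (i+1) x

def mulVec (cols : List (BitVec 32)) (x : BitVec 32) : BitVec 32 := mv cols 0 x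

def mm (A B : List (BitVec 32)) : List (BitVec 32) := B.map (mulVec A)

def idM : List (BitVec 32) := (List.range 32).map (fun i => (1#32) <<< i)

def M : List (BitVec 32) := (List.range 32).map (fun i => T ((1#32) <<< i))

def pw : Nat → Nat → List (BitVec 32)
  | 0, _ => idM
  | f+1, n =>
    if n = 0 then idM else
      let A := pw f (n/2)
      let A2 := mm A A
      if n % 2 = 1 then mm M A2 else A2

-- xor shuffle helper
lemma xor4 (a b c d : BitVec 32) : (a ^^^ b) ^^^ (c ^^^ d) = (a ^^^ c) ^^^ (b ^^^ d) := by
  ext i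
  simp [Bool.xor_assoc, Bool.xor_comm, Bool.xor_left_comm]

lemma mv_zero (cs : List (BitVec 32)) (i : Nat) : mv cs i 0 = 0 := by
  induction cs generalizing i with
  | nil => rfl
  | cons c cs ih => simpa [mv] using ih (i+1)

lemma mv_add (cs : List (BitVec 32)) (i : Nat) (x y : BitVec 32) :
    mv cs i (x ^^^ y) = mv cs i x ^^^ mv cs i y := by
  induction cs generalizing i with
  | nil => simp [mv]
  | cons c cs ih =>
    simp only [mv, ih, BitVec.getLsbD_xor]
    rw [xor4]
    congr 1
    cases hx : x.getLsbD i <;> cases hy : y.getLsbD i <;> simp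

lemma mulVec_add (A : List (BitVec 32)) (x y : BitVec 32) :
    mulVec A (x ^^^ y) = mulVec A x ^^^ mulVec A y := mv_add A 0 x y

lemma mulVec_zero (A : List (BitVec 32)) : mulVec A 0 = 0 := mv_zero A 0

lemma mv_map (f : BitVec 32 → BitVec 32) (h0 : f 0 = 0)
    (hadd : ∀ a b, f (a ^^^ b) = f a ^^^ f b)
    (cs : List (BitVec 32)) (i : Nat) (x : BitVec 32) :
    mv (cs.map f) i x = f (mv cs i x) := by
  induction cs generalizing i with
  | nil => simpa [mv] using h0.symm
  | cons c cs ih =>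
    simp only [List.map_cons, mv, ih, hadd]
    congr 1
    cases hx : x.getLsbD i <;> simp <;> exact h0.symm

lemma mulVec_mm (A B : List (BitVec 32)) (x : BitVec 32) :
    mulVec (mm A B) x = mulVec A (mulVec B x) :=
  mv_map (mulVec A) (mulVec_zero A) (mulVec_add A) B 0 x

lemma mv_zipWith (as : List (BitVec 32)) : ∀ (bs : List (BitVec 32)) (i : Nat) (x : BitVec 32),
    as.length = bs.length →
    mv (List.zipWith (· ^^^ ·) as bs) i x = mv as i x ^^^ mv bs i x := by
  induction as with
  | nil => intro bs i x h; cases bs <;> simp_all [mv]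
  | cons a as ih =>
    intro bs i x h
    cases bs with
    | nil => simp at h
    | cons b bs =>
      simp only [List.zipWith_cons_cons, mv]
      rw [ih bs (i+1) x (by simpa using h), xor4]
      congr 1
      cases hx : x.getLsbD i <;> simp

-- the basis lemma
lemma shiftRight_ge (x : BitVec 32) (i : Nat) (h : 32 ≤ i) : x >>> i = 0 := by
  apply BitVec.eq_of_toNat_eq
  simp [Nat.shiftRight_eq_div_pow]
  exact (lt_of_lt_of_le x.isLt (Nat.pow_le_pow_right (by norm_num) h))

lemma mv_basis : ∀ (n i : Nat), 32 ≤ i + n → ∀ x : BitVec 32,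
    mv ((List.range' i n).map (fun j => (1#32) <<< j)) i x = (x >>> i) <<< i := by
  intro n
  induction n with
  | zero =>
    intro i h x
    rw [shiftRight_ge x i (by omega)]
    simp [List.range', mv]
  | succ n ih =>
    intro i h x
    rw [List.range'_succ, List.map_cons]
    show (if x.getLsbD i then (1#32) <<< i else 0) ^^^
      mv ((List.range' (i+1) n).map (fun j => (1#32) <<< j)) (i+1) x = (x >>> i) <<< i
    rw [ih (i+1) (by omega) x]
    apply BitVec.eq_of_getLsbD_eq
    intro j hj'
    simp only [BitVec.getLsbD_xor, BitVec.getLsbD_shiftLeft, BitVec.getLsbD_ushiftRight]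
    rcases Nat.lt_trichotomy (j : Nat) i with hji | hji | hji
    · have h1 : (j : Nat) < i + 1 := by omega
      cases hx : x.getLsbD i <;> simp [hji, h1, BitVec.getLsbD_shiftLeft, Nat.not_le_of_lt]
    · have h1 : ¬ (j : Nat) < i := by omega
      have h2 : (j : Nat) < i + 1 := by omega
      have h3 : (j : Nat) - i = 0 := by omega
      have hj32 : (j : Nat) < 32 := hj'
      cases hx : x.getLsbD i <;>
        simp [hji.symm, h1, h2, h3, hj32, BitVec.getLsbD_shiftLeft, hx,
          show (1#32).getLsbD 0 = true from rfl] <;>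
        (subst hji; exact hx)
    · have h1 : ¬ (j : Nat) < i := by omega
      have h2 : ¬ (j : Nat) < i + 1 := by omega
      have h4 : ¬ (j : Nat) = i := by omega
      have h5 : i + 1 + ((j : Nat) - (i+1)) = (j : Nat) := by omega
      have h6 : i + ((j : Nat) - i) = (j : Nat) := by omega
      have h7 : ¬ ((j : Nat) - i = 0) := by omega
      cases hx : x.getLsbD i <;> simp [h1, h2, h4, h5, h6, h7, BitVec.getLsbD_shiftLeft]

lemma mulVec_id (x : BitVec 32) : mulVec idM x = x := by
  have := mv_basis 32 0 (by norm_num) x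
  simp only [idM, List.range_eq_range', mulVec]
  rw [this]
  simp

lemma idM_length : idM.length = 32 := by simp [idM]

lemma pw_length (f n : Nat) : (pw f n).length = 32 := by
  induction f generalizing n with
  | zero => exact idM_length
  | succ f ih =>
    rw [pw]
    split
    · exact idM_length
    · split <;> simp [mm, ih]

-- linearity of T
lemma shl_add (a b : BitVec 32) (n : Nat) : (a ^^^ b) <<< n = (a <<< n) ^^^ (b <<< n) := by
  ext i
  simp [Bool.and_xor_distrib_left]

lemma shr_add (a b : BitVec 32) (n : Nat) : (a ^^^ b) >>> n = (a >>> n) ^^^ (b >>> n) := by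
  ext i
  simp

def s1 (x : BitVec 32) : BitVec 32 := x ^^^ x <<< 13
def s2 (x : BitVec 32) : BitVec 32 := x ^^^ x >>> 17
def s3 (x : BitVec 32) : BitVec 32 := x ^^^ x <<< 5

lemma s1_add (a b : BitVec 32) : s1 (a ^^^ b) = s1 a ^^^ s1 b := by
  unfold s1; rw [shl_add, xor4]
lemma s2_add (a b : BitVec 32) : s2 (a ^^^ b) = s2 a ^^^ s2 b := by
  unfold s2; rw [shr_add, xor4]
lemma s3_add (a b : BitVec 32) : s3 (a ^^^ b) = s3 a ^^^ s3 b := by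
  unfold s3; rw [shl_add, xor4]

lemma T_eq_s (x : BitVec 32) : T x = s3 (s2 (s1 x)) := rfl

lemma T_add (a b : BitVec 32) : T (a ^^^ b) = T a ^^^ T b := by
  rw [T_eq_s, T_eq_s, T_eq_s, s1_add, s2_add, s3_add]

lemma T_zero : T 0 = 0 := by decide

lemma T_eq_mulVec (x : BitVec 32) : T x = mulVec M x := by
  have hM : M = idM.map T := by
    rw [M, idM, List.map_map]
    rfl
  rw [hM]
  show _ = mv (idM.map T) 0 x
  rw [mv_map T T_zero T_add]
  rw [show mv idM 0 x = mulVec idM x from rfl, mulVec_id]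

lemma pw_correct : ∀ (f n : Nat), n < 2 ^ f → ∀ x : BitVec 32, T^[n] x = mulVec (pw f n) x := by
  intro f
  induction f with
  | zero =>
    intro n hn x
    interval_cases n
    simp [pw, mulVec_id]
  | succ f ih =>
    intro n hn x
    by_cases h0 : n = 0
    · subst h0; simp [pw, mulVec_id]
    · have h2 : n / 2 < 2 ^ f := by
        have : 2 ^ (f+1) = 2 * 2 ^ f := by ring
        omega
      have hsplit : n = n % 2 + (n / 2 + n / 2) := by omega
      have hiter : T^[n] x = T^[n % 2] (T^[n/2] (T^[n/2] x)) := by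
        conv_lhs => rw [hsplit]
        rw [Function.iterate_add_apply, Function.iterate_add_apply]
      rw [hiter, ih _ h2 x, ih _ h2 _]
      rw [← mulVec_mm]
      rw [pw]
      simp only [h0, if_neg, ite_false]
      rcases Nat.mod_two_eq_zero_or_one n with hm | hm <;> rw [hm]
      · norm_num
      · norm_num
        rw [T_eq_mulVec, ← mulVec_mm]

lemma fix_of_dvd {x : BitVec 32} {a b : Nat} (h : T^[a] x = x) (hab : a ∣ b) : T^[b] x = x := by
  obtain ⟨c, rfl⟩ := hab
  rw [Function.iterate_mul]
  exact Function.iterate_fixed h c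

-- kernel lemma skeleton
lemma ker_of (m : Nat) (hm : m < 2 ^ 32) (Nm : List (BitVec 32))
    (hinv : mm Nm (List.zipWith (· ^^^ ·) (pw 32 m) idM) = idM) :
    ∀ x : BitVec 32, T^[m] x = x → x = 0 := by
  intro x h
  have hA : mulVec (pw 32 m) x = x := (pw_correct 32 m hm x).symm.trans h
  have hB : mulVec (List.zipWith (· ^^^ ·) (pw 32 m) idM) x = 0 := by
    show mv _ 0 x = 0
    rw [mv_zipWith _ _ _ _ (by rw [pw_length, idM_length])]
    show mulVec (pw 32 m) x ^^^ mulVec idM x = 0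
    rw [hA, mulVec_id, BitVec.xor_self]
    rfl
  calc x = mulVec idM x := (mulVec_id x).symm
    _ = mulVec (mm Nm (List.zipWith (· ^^^ ·) (pw 32 m) idM)) x := by rw [hinv]
    _ = mulVec Nm (mulVec (List.zipWith (· ^^^ ·) (pw 32 m) idM) x) := mulVec_mm _ _ _
    _ = 0 := by rw [hB, mulVec_zero]

def Ninv3 : List (BitVec 32) := [3335786257#32, 3906425407#32, 341432259#32, 3494094572#32, 1287699228#32, 2747661528#32, 2150333198#32, 1082698387#32, 2611265886#32, 3557500517#32, 3637289613#32, 2868896625#32, 410369362#32, 1269330915#32, 4088754115#32, 154103209#32, 1548993245#32, 1491119919#32, 2404261344#32, 3419380581#32, 2808848906#32, 551830956#32, 2331709170#32, 188466835#32, 3017353089#32, 1526152647#32, 441219537#32, 2121271239#32, 792014187#32, 2569338613#32, 2655281178#32, 105270877#32]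

def Ninv5 : List (BitVec 32) := [3037765269#32, 3182012677#32, 1669387622#32, 2344659563#32, 370929321#32, 3901211764#32, 1380852402#32, 4210098316#32, 2969553326#32, 2348631362#32, 1854761326#32, 1663573681#32, 1840518332#32, 1230994099#32, 4206056119#32, 2280264177#32, 2761711817#32, 2141840559#32, 1783100198#32, 2364816481#32, 1110627307#32, 3500024705#32, 2915665707#32, 311039995#32, 1912523766#32, 1756755554#32, 3294084956#32, 326808620#32, 2100464665#32, 1580234416#32, 2287416289#32, 4045495915#32]

def Ninv17 : List (BitVec 32) := [2080738118#32, 4098161938#32, 4167003272#32, 262081113#32, 4280086534#32, 4185094329#32, 2355677745#32, 3596925114#32, 3587069701#32, 2535039379#32, 1691659854#32, 3661366594#32, 3081963516#32, 2254921635#32, 205510780#32, 2576529806#32, 3889960224#32, 3965609850#32, 1675181996#32, 1663335326#32, 464242227#32, 164803375#32, 1135727768#32, 3702832275#32, 733074617#32, 3475373130#32, 3364815054#32, 2204756806#32, 2769922784#32, 2141131413#32, 4189123440#32, 1776631044#32]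

def Ninv257 : List (BitVec 32) := [1940479401#32, 668616311#32, 607776604#32, 3685168204#32, 1129029766#32, 648810898#32, 3303171155#32, 235886680#32, 3828553010#32, 2674952864#32, 3259775758#32, 1952802776#32, 3122666590#32, 807405955#32, 2074935119#32, 10541013#32, 2953885123#32, 3744595128#32, 1051926783#32, 353530678#32, 151549380#32, 394224902#32, 2319156462#32, 238374970#32, 180587326#32, 3341967654#32, 1264618217#32, 3233456239#32, 2630374898#32, 2982569044#32, 4209708186#32, 2989590033#32]

def Ninv65537 : List (BitVec 32) := [331728430#32, 2488218541#32, 1209385696#32, 682878283#32, 839817293#32, 1408035726#32, 4013029473#32, 4095696576#32, 1033618122#32, 2301755989#32, 769798078#32, 4185028050#32, 2663489015#32, 2683529367#32, 4136185144#32, 2950586883#32, 1578865829#32, 2816851372#32, 349201241#32, 3096975940#32, 3937016935#32, 2625434786#32, 2636012314#32, 211073125#32, 3311055944#32, 1920044434#32, 2025742764#32, 2060168078#32, 4064662879#32, 1177042686#32, 3953608156#32, 586778632#32]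

set_option maxRecDepth 100000 in
set_option maxHeartbeats 8000000 in
lemma ker3 : ∀ x : BitVec 32, T^[1431655765] x = x → x = 0 :=
  ker_of 1431655765 (by norm_num) Ninv3 (by decide)

set_option maxRecDepth 100000 in
set_option maxHeartbeats 8000000 in
lemma ker5 : ∀ x : BitVec 32, T^[858993459] x = x → x = 0 :=
  ker_of 858993459 (by norm_num) Ninv5 (by decide)

set_option maxRecDepth 100000 in
set_option maxHeartbeats 8000000 in
lemma ker17 : ∀ x : BitVec 32, T^[252645135] x = x → x = 0 :=
  ker_of 252645135 (by norm_num) Ninv17 (by decide)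

set_option maxRecDepth 100000 in
set_option maxHeartbeats 8000000 in
lemma ker257 : ∀ x : BitVec 32, T^[16711935] x = x → x = 0 :=
  ker_of 16711935 (by norm_num) Ninv257 (by decide)

set_option maxRecDepth 100000 in
set_option maxHeartbeats 8000000 in
lemma ker65537 : ∀ x : BitVec 32, T^[65535] x = x → x = 0 :=
  ker_of 65535 (by norm_num) Ninv65537 (by decide)

set_option maxRecDepth 100000 in
set_option maxHeartbeats 8000000 in
lemma pw_top : pw 32 4294967295 = idM := by decide

/-- The SHR xorshift transformation has maximal period: for every nonzero 32-bit
word `x`, the least positive integer `n` with `T^[n] x = x` is `2^32 - 1`. -/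
theorem shr3_xorshift_maximal_period (x : BitVec 32) (hx : x ≠ 0) :
    IsLeast {n : ℕ | 0 < n ∧ T^[n] x = x} (2 ^ 32 - 1) := by
  have hN : (2:ℕ) ^ 32 - 1 = 4294967295 := by norm_num
  have hNfix : T^[4294967295] x = x := by
    rw [pw_correct 32 4294967295 (by norm_num) x, pw_top, mulVec_id]
  rw [hN]
  constructor
  · exact ⟨by norm_num, hNfix⟩
  · rintro n ⟨hn, hfix⟩
    have hex : ∃ k, 0 < k ∧ T^[k] x = x := ⟨4294967295, by norm_num, hNfix⟩
    have hd := Nat.find_spec hex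
    set d := Nat.find hex with hdef
    have hdpos : 0 < d := hd.1
    have hdvd : ∀ k, 0 < k → T^[k] x = x → d ∣ k := by
      intro k hk hkfix
      have h1 : T^[d * (k / d)] x = x := fix_of_dvd hd.2 ⟨k / d, rfl⟩
      have h3 : T^[k % d] x = x := by
        calc T^[k % d] x = T^[k % d] (T^[d * (k / d)] x) := by rw [h1]
          _ = T^[k % d + d * (k / d)] x := (Function.iterate_add_apply T _ _ x).symm
          _ = T^[k] x := by rw [Nat.mod_add_div k d]
          _ = x := hkfix
      rcases Nat.eq_zero_or_pos (k % d) with h0 | hpos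
      · exact Nat.dvd_of_mod_eq_zero h0
      · exact absurd ⟨hpos, h3⟩ (Nat.find_min hex (Nat.mod_lt k hdpos))
    have hdN : d ∣ 4294967295 := hdvd _ (by norm_num) hNfix
    have hdn : d ∣ n := hdvd n hn hfix
    rcases eq_or_ne d 4294967295 with he | hne
    · rw [← he]; exact Nat.le_of_dvd hn hdn
    · exfalso
      obtain ⟨k, hk⟩ := hdN
      have hk1 : k ≠ 1 := by rintro rfl; omega
      obtain ⟨p, pp, hpk⟩ := Nat.exists_prime_and_dvd hk1
      obtain ⟨j, hj⟩ := hpk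
      have hdNp : d ∣ 4294967295 / p := by
        refine ⟨j, ?_⟩
        rw [hk, hj, show d * (p * j) = p * (d * j) from by ring,
          Nat.mul_div_cancel_left _ pp.pos]
      have hpN : p ∣ 4294967295 := ⟨d * j, by rw [hk, hj]; ring⟩
      rw [show (4294967295:ℕ) = 3 * (5 * (17 * (257 * 65537))) from by norm_num] at hpN
      have hp5 : p = 3 ∨ p = 5 ∨ p = 17 ∨ p = 257 ∨ p = 65537 := by
        rcases (Nat.Prime.dvd_mul pp).mp hpN with h | h
        · exact Or.inl ((Nat.prime_dvd_prime_iff_eq pp (by norm_num)).mp h)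
        rcases (Nat.Prime.dvd_mul pp).mp h with h | h
        · exact Or.inr (Or.inl ((Nat.prime_dvd_prime_iff_eq pp (by norm_num)).mp h))
        rcases (Nat.Prime.dvd_mul pp).mp h with h | h
        · exact Or.inr (Or.inr (Or.inl ((Nat.prime_dvd_prime_iff_eq pp (by norm_num)).mp h)))
        rcases (Nat.Prime.dvd_mul pp).mp h with h | h
        · exact Or.inr (Or.inr (Or.inr (Or.inl
            ((Nat.prime_dvd_prime_iff_eq pp (by norm_num)).mp h))))
        · exact Or.inr (Or.inr (Or.inr (Or.inr
            ((Nat.prime_dvd_prime_iff_eq pp (by norm_num)).mp h))))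
      rcases hp5 with rfl | rfl | rfl | rfl | rfl
      · exact hx (ker3 x (fix_of_dvd hd.2
          (by rw [show (4294967295:ℕ) / 3 = 1431655765 from by norm_num] at hdNp; exact hdNp)))
      · exact hx (ker5 x (fix_of_dvd hd.2
          (by rw [show (4294967295:ℕ) / 5 = 858993459 from by norm_num] at hdNp; exact hdNp)))
      · exact hx (ker17 x (fix_of_dvd hd.2
          (by rw [show (4294967295:ℕ) / 17 = 252645135 from by norm_num] at hdNp; exact hdNp)))
      · exact hx (ker257 x (fix_of_dvd hd.2
          (by rw [show (4294967295:ℕ) / 257 = 16711935 from by norm_num] at hdNp; exact hdNp)))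
      · exact hx (ker65537 x (fix_of_dvd hd.2
          (by rw [show (4294967295:ℕ) / 65537 = 65535 from by norm_num] at hdNp; exact hdNp)))
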